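/- For all real x ≥ (ln π)/2 one has 1 + (ln π)/(2x) < R(x). Moreover R(x) < 1 + 0.9265/x for all x ≥ 1, R(x) < 1 + 0.5979/x for all x ≥ 10, and R(x) < 1 + 0.5749/x for all x ≥ 100. -/

import Mathlib

open Real

noncomputable def R (x : ℝ) : ℝ := Real.pi ^ (1 / (2 * x)) * Real.exp (1 / (12 * x ^ 2))

lemma R_eq {x : ℝ} (hx : 0 < x) :
    R x = Real.exp (Real.log Real.pi / (2 * x) + 1 / (12 * x ^ 2)) := by
  rw [R, Real.rpow_def_of_pos Real.pi_pos, ← Real.exp_add]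
  congr 1
  ring

/-- Chord inequality for `exp` : for `0 < u ≤ v` and `c, d ≥ 0`,
`exp (c u + d u²) ≤ 1 + (u/v) (exp (c v + d v²) - 1)`. -/
lemma chord {c d u v : ℝ} (hc : 0 ≤ c) (hd : 0 ≤ d) (hu : 0 < u) (huv : u ≤ v) :
    Real.exp (c * u + d * u ^ 2) ≤ 1 + (u / v) * (Real.exp (c * v + d * v ^ 2) - 1) := by
  have hv : 0 < v := hu.trans_le huv
  set l := u / v with hl
  have hl0 : 0 < l := div_pos hu hv
  have hl1 : l ≤ 1 := (div_le_one hv).2 huv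
  have h1 : c * u + d * u ^ 2 ≤ l * (c * v + d * v ^ 2) := by
    have hlv : l * (c * v + d * v ^ 2) = c * u + d * (u * v) := by
      rw [hl, div_mul_eq_mul_div, div_eq_iff hv.ne']
      ring
    rw [hlv]
    nlinarith [mul_le_mul_of_nonneg_left huv (mul_nonneg hd hu.le)]
  calc Real.exp (c * u + d * u ^ 2)
      ≤ Real.exp (l * (c * v + d * v ^ 2)) := Real.exp_le_exp.2 h1
    _ = Real.exp ((1 - l) • (0 : ℝ) + l • (c * v + d * v ^ 2)) := by
        norm_num [smul_eq_mul]
    _ ≤ (1 - l) • Real.exp 0 + l • Real.exp (c * v + d * v ^ 2) :=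
        convexOn_exp.2 (Set.mem_univ _) (Set.mem_univ _) (by linarith) hl0.le (by ring)
    _ = 1 + l * (Real.exp (c * v + d * v ^ 2) - 1) := by
        simp [smul_eq_mul]; ring

lemma log_pi_lt : Real.log Real.pi < 1.14473 := by
  rw [Real.log_lt_iff_lt_exp Real.pi_pos]
  calc Real.pi < 3.141593 := Real.pi_lt_d6
    _ ≤ ∑ i ∈ Finset.range 13, (1.14473 : ℝ) ^ i / i.factorial := by
        simp only [Finset.sum_range_succ, Finset.sum_range_zero, Nat.factorial]
        norm_num
    _ ≤ Real.exp 1.14473 := Real.sum_le_exp_of_nonneg (by norm_num) 13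

/-- General reduction: if the numeric inequality holds at the endpoint `b`,
it holds for all `x ≥ b`. -/
lemma upper {a b x : ℝ} (hb : 0 < b) (hx : b ≤ x)
    (hnum : Real.exp (Real.log Real.pi / (2 * b) + 1 / (12 * b ^ 2)) < 1 + a / b) :
    R x < 1 + a / x := by
  have hx0 : 0 < x := hb.trans_le hx
  have hc : 0 ≤ Real.log Real.pi / 2 := by
    have : (1 : ℝ) < Real.pi := by linarith [Real.pi_gt_three]
    have := Real.log_pos this
    linarith
  have key := chord (c := Real.log Real.pi / 2) (d := 1 / 12) hc (by norm_num)
      (u := 1 / x) (v := 1 / b) (by positivity) (by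
        apply one_div_le_one_div_of_le hb hx)
  have e1 : Real.log Real.pi / 2 * (1 / x) + 1 / 12 * (1 / x) ^ 2
      = Real.log Real.pi / (2 * x) + 1 / (12 * x ^ 2) := by
    field_simp
  have e2 : Real.log Real.pi / 2 * (1 / b) + 1 / 12 * (1 / b) ^ 2
      = Real.log Real.pi / (2 * b) + 1 / (12 * b ^ 2) := by
    field_simp
  rw [e1, e2] at key
  rw [R_eq hx0]
  have hdiv : (1 / x) / (1 / b) = b / x := by
    field_simp
  rw [hdiv] at key
  have hbx : 0 < b / x := div_pos hb hx0
  have hE : Real.exp (Real.log Real.pi / (2 * b) + 1 / (12 * b ^ 2)) - 1 < a / b := by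
    linarith
  have : (b / x) * (Real.exp (Real.log Real.pi / (2 * b) + 1 / (12 * b ^ 2)) - 1)
      < (b / x) * (a / b) := by
    exact mul_lt_mul_of_pos_left hE hbx
  have habx : (b / x) * (a / b) = a / x := by
    field_simp
  rw [habx] at this
  linarith

/-- Corollary 1: `1 + (ln π)/(2x) < R(x)` for `x ≥ (ln π)/2`, and `R(x) < 1 + a/x`
for `(a, b) = (0.9265, 1), (0.5979, 10), (0.5749, 100)` and all `x ≥ b`. -/
theorem R_estimates :
    (∀ x : ℝ, Real.log Real.pi / 2 ≤ x → 1 + Real.log Real.pi / (2 * x) < R x) ∧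
    (∀ x : ℝ, 1 ≤ x → R x < 1 + 0.9265 / x) ∧
    (∀ x : ℝ, 10 ≤ x → R x < 1 + 0.5979 / x) ∧
    (∀ x : ℝ, 100 ≤ x → R x < 1 + 0.5749 / x) := by
  have hpi1 : (1 : ℝ) < Real.pi := by linarith [Real.pi_gt_three]
  have hlogpi : 0 < Real.log Real.pi := Real.log_pos hpi1
  refine ⟨?_, ?_, ?_, ?_⟩
  · intro x hx
    have hx0 : 0 < x := lt_of_lt_of_le (by linarith) hx
    rw [R_eq hx0]
    have hs : Real.log Real.pi / (2 * x) < Real.log Real.pi / (2 * x) + 1 / (12 * x ^ 2) := by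
      have : 0 < 1 / (12 * x ^ 2) := by positivity
      linarith
    have := Real.add_one_le_exp (Real.log Real.pi / (2 * x) + 1 / (12 * x ^ 2))
    linarith
  · intro x hx
    apply upper one_pos hx
    have hq : Real.log Real.pi / (2 * 1) + 1 / (12 * 1 ^ 2) ≤ 1.14473 / 2 + 1 / 12 := by
      have := log_pi_lt
      norm_num
      linarith
    calc Real.exp (Real.log Real.pi / (2 * 1) + 1 / (12 * 1 ^ 2))
        ≤ Real.exp (1.14473 / 2 + 1 / 12) := Real.exp_le_exp.2 hq
      _ ≤ (∑ m ∈ Finset.range 8, (1.14473 / 2 + 1 / 12 : ℝ) ^ m / m.factorial) +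
          (1.14473 / 2 + 1 / 12 : ℝ) ^ 8 * (8 + 1) / (Nat.factorial 8 * 8) :=
          Real.exp_bound' (by norm_num) (by norm_num) (by norm_num)
      _ < 1 + 0.9265 / 1 := by
          simp only [Finset.sum_range_succ, Finset.sum_range_zero, Nat.factorial]
          norm_num
  · intro x hx
    apply upper (by norm_num : (0:ℝ) < 10) hx
    have hq : Real.log Real.pi / (2 * 10) + 1 / (12 * 10 ^ 2) ≤ 1.14473 / 20 + 1 / 1200 := by
      have := log_pi_lt
      norm_num
      linarith
    calc Real.exp (Real.log Real.pi / (2 * 10) + 1 / (12 * 10 ^ 2))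
        ≤ Real.exp (1.14473 / 20 + 1 / 1200) := Real.exp_le_exp.2 hq
      _ ≤ (∑ m ∈ Finset.range 6, (1.14473 / 20 + 1 / 1200 : ℝ) ^ m / m.factorial) +
          (1.14473 / 20 + 1 / 1200 : ℝ) ^ 6 * (6 + 1) / (Nat.factorial 6 * 6) :=
          Real.exp_bound' (by norm_num) (by norm_num) (by norm_num)
      _ < 1 + 0.5979 / 10 := by
          simp only [Finset.sum_range_succ, Finset.sum_range_zero, Nat.factorial]
          norm_num
  · intro x hx
    apply upper (by norm_num : (0:ℝ) < 100) hx
    have hq : Real.log Real.pi / (2 * 100) + 1 / (12 * 100 ^ 2)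
        ≤ 1.14473 / 200 + 1 / 120000 := by
      have := log_pi_lt
      norm_num
      linarith
    calc Real.exp (Real.log Real.pi / (2 * 100) + 1 / (12 * 100 ^ 2))
        ≤ Real.exp (1.14473 / 200 + 1 / 120000) := Real.exp_le_exp.2 hq
      _ ≤ (∑ m ∈ Finset.range 5, (1.14473 / 200 + 1 / 120000 : ℝ) ^ m / m.factorial) +
          (1.14473 / 200 + 1 / 120000 : ℝ) ^ 5 * (5 + 1) / (Nat.factorial 5 * 5) :=
          Real.exp_bound' (by norm_num) (by norm_num) (by norm_num)
      _ < 1 + 0.5749 / 100 := by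
          simp only [Finset.sum_range_succ, Finset.sum_range_zero, Nat.factorial]
          norm_num
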